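/- arXiv:2008.04593 — 2 statements merged into one kernel-verified Lean document; each statement's English description precedes it below -/
import Mathlib

section
/- Let B₁ ∪ B₂ be a vertical alternation where |B₁| = |B₂| = m (B₁ and B₂ interleave in the horizontal direction, alternating columns). If S is a point set with intv_x(S ∩ (B₁ ∪ B₂)) ≤ t, then the densities d_i = |S ∩ B_i|/m satisfy |d₁ − d₂| ≤ t/m. -/
namespace PPM

noncomputable section

/-- Intervalicity: minimum number of pairwise disjoint integer intervals covering `A`. -/
def intervalicity {n : ℕ} (A : Finset (Fin n)) : ℕ :=
  sInf {m | ∃ F : Finset (Finset (Fin n)), F.card = m ∧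
    (∀ I ∈ F, ∃ a b : Fin n, I = Finset.Icc a b) ∧
    (F : Set (Finset (Fin n))).PairwiseDisjoint id ∧
    F.sup id = A}

/-- Grid-complexity of a point set. -/
def gridComplexity {n : ℕ} (S : Finset (Fin n × Fin n)) : ℕ :=
  max (intervalicity (S.image Prod.fst)) (intervalicity (S.image Prod.snd))

/-- The diagram of a permutation. -/
def diagram {n : ℕ} (π : Equiv.Perm (Fin n)) : Finset (Fin n × Fin n) :=
  Finset.univ.image (fun i => (i, π i))

/-- Rooted binary trees with labeled leaves. -/
inductive GTree (α : Type) where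
  | leaf : α → GTree α
  | node : GTree α → GTree α → GTree α

namespace GTree
variable {α : Type}

def leafList : GTree α → List α
  | leaf a => [a]
  | node l r => l.leafList ++ r.leafList

def subtrees : GTree α → List (GTree α)
  | leaf a => [leaf a]
  | node l r => node l r :: (l.subtrees ++ r.subtrees)

def IsCaterpillar : GTree α → Prop
  | leaf _ => True
  | node l r => ((∃ a, l = leaf a) ∨ (∃ a, r = leaf a)) ∧ IsCaterpillar l ∧ IsCaterpillar r

def leafDepth [DecidableEq α] : GTree α → α → ℕ
  | leaf _, _ => 0
  | node l r, a => if a ∈ l.leafList then l.leafDepth a + 1 else r.leafDepth a + 1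

end GTree

/-- Grid-width of a grid tree. -/
def treeGW {n : ℕ} (T : GTree (Fin n × Fin n)) : ℕ :=
  (T.subtrees.map (fun t => gridComplexity t.leafList.toFinset)).foldr max 0

/-- `T` is a grid tree of `π`: its leaves are labeled bijectively by the points of `π`. -/
def IsGridTree {n : ℕ} (π : Equiv.Perm (Fin n)) (T : GTree (Fin n × Fin n)) : Prop :=
  T.leafList.Nodup ∧ T.leafList.toFinset = diagram π

/-- Grid-width of a permutation. -/
def gw {n : ℕ} (π : Equiv.Perm (Fin n)) : ℕ :=
  sInf {w | ∃ T, IsGridTree π T ∧ treeGW T = w}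

/-- Path-width of a permutation: minimum over caterpillar grid trees. -/
def pw {n : ℕ} (π : Equiv.Perm (Fin n)) : ℕ :=
  sInf {w | ∃ T, IsGridTree π T ∧ T.IsCaterpillar ∧ treeGW T = w}

/-- The `i`-th prefix point set of `π` in `σ`-ordering. -/
def prefixSet {n : ℕ} (π σ : Equiv.Perm (Fin n)) (i : Fin n) : Finset (Fin n × Fin n) :=
  (Finset.univ.filter (fun j => j ≤ i)).image (fun j => (σ j, π (σ j)))

/-- Path-width of `π` in `σ`-ordering. -/
def pwOrd {n : ℕ} (π σ : Equiv.Perm (Fin n)) : ℕ :=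
  Finset.univ.sup (fun i => gridComplexity (prefixSet π σ i))

/-- Horizontal path-width: `σ` is the identity (left-to-right order). -/
def hpw {n : ℕ} (π : Equiv.Perm (Fin n)) : ℕ := pwOrd π 1

/-- Vertical path-width: `σ = π⁻¹` (bottom-to-top order). -/
def vpw {n : ℕ} (π : Equiv.Perm (Fin n)) : ℕ := pwOrd π π⁻¹

/-- Pattern containment: `τ` contains `π`. -/
def Contains {n k : ℕ} (τ : Equiv.Perm (Fin n)) (π : Equiv.Perm (Fin k)) : Prop :=
  ∃ f : Fin k → Fin n, StrictMono f ∧ ∀ i j, π i < π j ↔ τ (f i) < τ (f j)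

/-- A permutation class, given by its members of each length. -/
abbrev PermClass := ∀ n : ℕ, Set (Equiv.Perm (Fin n))

/-- Closure under pattern containment. -/
def IsPermClass (C : PermClass) : Prop :=
  ∀ {n k : ℕ} (τ : Equiv.Perm (Fin n)) (π : Equiv.Perm (Fin k)),
    τ ∈ C n → Contains τ π → π ∈ C k

/-- `π` is griddable by the monotone gridding matrix `M`
(`some true` = Inc, `some false` = Dec, `none` = empty);
columns are the first index, rows the second. -/
def MonGriddable {n k l : ℕ} (M : Fin k → Fin l → Option Bool)
    (π : Equiv.Perm (Fin n)) : Prop :=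
  ∃ (c : Fin n → Fin k) (r : Fin n → Fin l), Monotone c ∧ Monotone r ∧
    (∀ i : Fin n, (M (c i) (r (π i))).isSome) ∧
    (∀ i j : Fin n, i < j → c i = c j → r (π i) = r (π j) →
      ∀ b, M (c i) (r (π i)) = some b → (if b then π i < π j else π j < π i))

/-- Adjacency of cells in the cell graph of a monotone gridding matrix:
both cells nonempty, sharing a row or a column, with only empty cells in between. -/
def MonCellAdj {k l : ℕ} (M : Fin k → Fin l → Option Bool)
    (p q : Fin k × Fin l) : Prop :=
  (M p.1 p.2).isSome ∧ (M q.1 q.2).isSome ∧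
  ((p.1 = q.1 ∧ p.2 ≠ q.2 ∧ ∀ j : Fin l,
      ((p.2 < j ∧ j < q.2) ∨ (q.2 < j ∧ j < p.2)) → M p.1 j = Option.none) ∨
   (p.2 = q.2 ∧ p.1 ≠ q.1 ∧ ∀ i : Fin k,
      ((p.1 < i ∧ i < q.1) ∨ (q.1 < i ∧ i < p.1)) → M i p.2 = Option.none))

/-- The cell graph of a monotone gridding matrix. -/
def monCellGraph {k l : ℕ} (M : Fin k → Fin l → Option Bool) :
    SimpleGraph (Fin k × Fin l) :=
  SimpleGraph.fromRel (MonCellAdj M)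

/-- A consistent orientation of a monotone gridding matrix, signs coded by `Bool`. -/
def ConsistentOrientation {k l : ℕ} (M : Fin k → Fin l → Option Bool)
    (c : Fin k → Bool) (r : Fin l → Bool) : Prop :=
  ∀ i j, (M i j = some true → c i = r j) ∧ (M i j = some false → c i ≠ r j)

/-- The refinement `M^{×q}` of a monotone gridding matrix. -/
def refine {k l : ℕ} (M : Fin k → Fin l → Option Bool) (q : ℕ) :
    Fin (q * k) → Fin (q * l) → Option Bool :=
  fun i j =>
    match M ⟨i.val / q, Nat.div_lt_of_lt_mul i.isLt⟩
            ⟨j.val / q, Nat.div_lt_of_lt_mul j.isLt⟩ with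
    | some true => if i.val % q = j.val % q then some true else none
    | some false => if i.val % q + j.val % q = q - 1 then some false else none
    | none => none

/-- The restriction of `π` to the position set `P` is order-isomorphic to a member of `C`. -/
def CellPattern {n : ℕ} (π : Equiv.Perm (Fin n)) (P : Finset (Fin n))
    (C : PermClass) : Prop :=
  ∃ m : ℕ, ∃ σ ∈ C m, ∃ f : Fin m → Fin n, StrictMono f ∧
    Finset.univ.image f = P ∧ ∀ i j, σ i < σ j ↔ π (f i) < π (f j)

/-- `π` is griddable by a gridding matrix with permutation-class entries. -/
def GenGriddable {n k l : ℕ} (M : Fin k → Fin l → PermClass)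
    (π : Equiv.Perm (Fin n)) : Prop :=
  ∃ (c : Fin n → Fin k) (r : Fin n → Fin l), Monotone c ∧ Monotone r ∧
    ∀ (a : Fin k) (b : Fin l),
      (Finset.univ.filter (fun i => c i = a ∧ r (π i) = b) = ∅) ∨
      CellPattern π (Finset.univ.filter (fun i => c i = a ∧ r (π i) = b)) (M a b)

/-- A class containing some nonempty permutation. -/
def ClassNonempty (C : PermClass) : Prop := ∃ n, 0 < n ∧ (C n).Nonempty

/-- An infinite class: members of arbitrarily large lengths. -/
def ClassInfinite (C : PermClass) : Prop := ∀ m, ∃ n, m ≤ n ∧ (C n).Nonempty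

/-- Cell adjacency for a general gridding matrix. -/
def GenCellAdj {k l : ℕ} (M : Fin k → Fin l → PermClass)
    (p q : Fin k × Fin l) : Prop :=
  ClassNonempty (M p.1 p.2) ∧ ClassNonempty (M q.1 q.2) ∧
  ((p.1 = q.1 ∧ p.2 ≠ q.2 ∧ ∀ j : Fin l,
      ((p.2 < j ∧ j < q.2) ∨ (q.2 < j ∧ j < p.2)) → ¬ ClassNonempty (M p.1 j)) ∨
   (p.2 = q.2 ∧ p.1 ≠ q.1 ∧ ∀ i : Fin k,
      ((p.1 < i ∧ i < q.1) ∨ (q.1 < i ∧ i < p.1)) → ¬ ClassNonempty (M i p.2)))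

/-- The cell graph of a general gridding matrix. -/
def genCellGraph {k l : ℕ} (M : Fin k → Fin l → PermClass) :
    SimpleGraph (Fin k × Fin l) :=
  SimpleGraph.fromRel (GenCellAdj M)

/-- Unbounded horizontal path-width of a class. -/
def UnboundedHPW (C : PermClass) : Prop := ∀ K, ∃ n, ∃ π ∈ C n, K < hpw π

/-- Unbounded vertical path-width of a class. -/
def UnboundedVPW (C : PermClass) : Prop := ∀ K, ∃ n, ∃ π ∈ C n, K < vpw π

/-- `(p, q)` is a bumper. -/
def Bumper {k l : ℕ} (M : Fin k → Fin l → PermClass) (p q : Fin k × Fin l) : Prop :=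
  (UnboundedHPW (M q.1 q.2) ∧ p.1 = q.1) ∨ (UnboundedVPW (M q.1 q.2) ∧ p.2 = q.2)

/-- The cell graph of `M` contains a bumper-ended path. -/
def HasBumperEndedPath {k l : ℕ} (M : Fin k → Fin l → PermClass) : Prop :=
  ∃ (L : List (Fin k × Fin l)) (h : 2 ≤ L.length),
    List.Chain' (genCellGraph M).Adj L ∧ L.Nodup ∧
    Bumper M (L.get ⟨1, by omega⟩) (L.get ⟨0, by omega⟩) ∧
    Bumper M (L.get ⟨L.length - 2, by omega⟩) (L.get ⟨L.length - 1, by omega⟩)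

/-- Horizontal alternation: all even entries (1-based values) precede all odd entries. -/
def IsHorizAlt {n : ℕ} (π : Equiv.Perm (Fin n)) : Prop :=
  ∀ i j : Fin n, i < j → ¬(Odd ((π i).val + 1) ∧ Even ((π j).val + 1))

/-- `σ` is monotone on the positions satisfying `P`. -/
def MonOn {n : ℕ} (σ : Equiv.Perm (Fin n)) (P : Fin n → Prop) : Prop :=
  (∀ i j, i < j → P i → P j → σ i < σ j) ∨ (∀ i j, i < j → P i → P j → σ j < σ i)

/-- Monotone horizontal alternation. -/
def IsMonHorizAlt {n : ℕ} (σ : Equiv.Perm (Fin n)) : Prop :=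
  IsHorizAlt σ ∧ MonOn σ (fun i => Odd ((σ i).val + 1)) ∧
    MonOn σ (fun i => Even ((σ i).val + 1))

/-- The 1×2 horizontal monotone juxtaposition matrix. -/
def juxH (b₁ b₂ : Bool) : Fin 2 → Fin 1 → Option Bool :=
  fun i _ => some (if i = 0 then b₁ else b₂)

/-- No three consecutive cells of the list share a row or a column. -/
def ProperTurning {k l : ℕ} (L : List (Fin k × Fin l)) : Prop :=
  ∀ a b c : Fin k × Fin l, [a, b, c] <:+: L →
    ¬(a.1 = b.1 ∧ b.1 = c.1) ∧ ¬(a.2 = b.2 ∧ b.2 = c.2)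

/-- The class of increasing (`true`) or decreasing (`false`) permutations. -/
def monClass (b : Bool) : PermClass :=
  fun n => {π | ∀ i j : Fin n, i < j → (if b then π i < π j else π j < π i)}

end

end PPM

open PPM

private lemma alt_sum_Ico (a b : ℕ) : |∑ k ∈ Finset.Ico a b, (-1:ℤ)^k| ≤ 1 := by
  rcases le_or_gt a b with h|h
  · rw [Finset.sum_Ico_eq_sub _ h, neg_one_geom_sum, neg_one_geom_sum]
    split_ifs <;> norm_num
  · rw [Finset.Ico_eq_empty (by omega)]; simp

private lemma alt_sum_convex {N : ℕ} (T : Finset (Fin N))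
    (hconv : ∀ i k j : Fin N, i ∈ T → j ∈ T → i ≤ k → k ≤ j → k ∈ T) :
    |∑ i ∈ T, (-1:ℤ)^i.val| ≤ 1 := by
  rcases T.eq_empty_or_nonempty with rfl|hT
  · simp
  · have hIcc : T = Finset.Icc (T.min' hT) (T.max' hT) := by
      ext k
      simp only [Finset.mem_Icc]
      exact ⟨fun hk => ⟨T.min'_le k hk, T.le_max' k hk⟩,
        fun ⟨a, b⟩ => hconv _ k _ (T.min'_mem hT) (T.max'_mem hT) a b⟩
    have h1 : ∑ i ∈ T, (-1:ℤ)^i.val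
        = ∑ i ∈ Finset.Icc (T.min' hT) (T.max' hT), (-1:ℤ)^i.val :=
      congrArg (fun s => Finset.sum s (fun i => (-1:ℤ)^i.val)) hIcc
    have h2 : ∑ i ∈ Finset.Icc (T.min' hT) (T.max' hT), (-1:ℤ)^i.val
        = ∑ k ∈ Finset.Ico (T.min' hT).val ((T.max' hT).val + 1), (-1:ℤ)^k := by
      rw [Finset.Ico_add_one_right_eq_Icc, ← Fin.map_valEmbedding_Icc, Finset.sum_map]
      rfl
    rw [h1, h2]
    exact alt_sum_Ico _ _

/-- if `B₁ ∪ B₂` is an alternation of two `m`-point sets in the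
horizontal direction and `intv_x(S ∩ (B₁ ∪ B₂)) ≤ t`, then the densities of `S` in
`B₁` and `B₂` differ by at most `t/m`. -/
theorem density_propagation {n m : ℕ} (hm : 0 < m) (B₁ B₂ : Finset (Fin n × Fin n))
    (h1 : B₁.card = m) (h2 : B₂.card = m) (hdisj : Disjoint B₁ B₂)
    (f : Fin (2 * m) → Fin n × Fin n)
    (hmono : ∀ i j : Fin (2 * m), i < j → (f i).1 < (f j).1)
    (himg : Finset.univ.image f = B₁ ∪ B₂)
    (halt : ∀ i : Fin (2 * m), (Even i.val → f i ∈ B₁) ∧ (Odd i.val → f i ∈ B₂))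
    (S : Finset (Fin n × Fin n)) (t : ℕ)
    (ht : intervalicity ((S ∩ (B₁ ∪ B₂)).image Prod.fst) ≤ t) :
    |((S ∩ B₁).card : ℚ) / m - ((S ∩ B₂).card : ℚ) / m| ≤ (t : ℚ) / m := by
  classical
  have hfinj : Function.Injective f := by
    intro i j h
    by_contra hne
    rcases lt_or_gt_of_ne hne with hij|hij
    · exact absurd (hmono i j hij) (by rw [h]; exact lt_irrefl _)
    · exact absurd (hmono j i hij) (by rw [h]; exact lt_irrefl _)
  have hxinj : ∀ i j, (f i).1 = (f j).1 → i = j := by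
    intro i j h
    by_contra hne
    rcases lt_or_gt_of_ne hne with hij|hij
    · exact absurd (hmono i j hij) (by rw [h]; exact lt_irrefl _)
    · exact absurd (hmono j i hij) (by rw [h]; exact lt_irrefl _)
  have hmemU : ∀ i, f i ∈ B₁ ∪ B₂ := by
    intro i
    rcases Nat.even_or_odd i.val with h|h
    · exact Finset.mem_union_left _ ((halt i).1 h)
    · exact Finset.mem_union_right _ ((halt i).2 h)
  set A : Finset (Fin n) := (S ∩ (B₁ ∪ B₂)).image Prod.fst with hAdef
  have hiffS : ∀ i, f i ∈ S ↔ (f i).1 ∈ A := by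
    intro i
    constructor
    · intro h
      exact Finset.mem_image_of_mem _ (Finset.mem_inter.mpr ⟨h, hmemU i⟩)
    · intro h
      rcases Finset.mem_image.mp h with ⟨p, hp, hpx⟩
      have hpU : p ∈ B₁ ∪ B₂ := (Finset.mem_inter.mp hp).2
      rw [← himg] at hpU
      rcases Finset.mem_image.mp hpU with ⟨j, -, rfl⟩
      obtain rfl := hxinj j i hpx
      exact (Finset.mem_inter.mp hp).1
  -- obtain an interval decomposition
  have hne : {m' | ∃ F : Finset (Finset (Fin n)), F.card = m' ∧
      (∀ I ∈ F, ∃ a b : Fin n, I = Finset.Icc a b) ∧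
      (F : Set (Finset (Fin n))).PairwiseDisjoint id ∧
      F.sup id = A}.Nonempty := by
    refine ⟨(A.image (fun a => ({a} : Finset (Fin n)))).card,
      A.image (fun a => ({a} : Finset (Fin n))), rfl, ?_, ?_, ?_⟩
    · intro I hI
      rcases Finset.mem_image.mp hI with ⟨a, -, rfl⟩
      exact ⟨a, a, by simp⟩
    · intro I hI J hJ hIJ
      rcases Finset.mem_image.mp hI with ⟨a, -, rfl⟩
      rcases Finset.mem_image.mp hJ with ⟨b, -, rfl⟩
      have : a ≠ b := fun h => hIJ (by rw [h])
      exact Finset.disjoint_singleton.mpr this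
    · ext x
      rw [Finset.mem_sup]
      constructor
      · rintro ⟨I, hI, hx⟩
        rcases Finset.mem_image.mp hI with ⟨a, ha, rfl⟩
        have hx' : x = a := Finset.mem_singleton.mp hx
        subst hx'; exact ha
      · intro hx
        exact ⟨{x}, Finset.mem_image_of_mem _ hx, Finset.mem_singleton_self x⟩
  have hmem := Nat.sInf_mem hne
  obtain ⟨F, hFcard, hFint, hFdisj, hFsup⟩ := hmem
  have hFt : F.card ≤ t := by
    rw [hFcard]
    exact ht
  set J : Finset (Fin (2*m)) := Finset.univ.filter (fun i => f i ∈ S) with hJ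
  set T : Finset (Fin n) → Finset (Fin (2*m)) :=
    fun I => J.filter (fun i => (f i).1 ∈ I) with hTdef
  have hsub : ∀ I ∈ F, (I : Finset (Fin n)) ⊆ A := by
    intro I hI x hx
    rw [← hFsup, Finset.mem_sup]
    exact ⟨I, hI, hx⟩
  have hbiUnion : J = F.biUnion T := by
    ext i
    simp only [Finset.mem_biUnion, hTdef, Finset.mem_filter]
    constructor
    · intro hi
      have hiS : f i ∈ S := (Finset.mem_filter.mp hi).2
      have hx : (f i).1 ∈ A := (hiffS i).mp hiS
      rw [← hFsup, Finset.mem_sup] at hx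
      rcases hx with ⟨I, hI, hxI⟩
      exact ⟨I, hI, hi, hxI⟩
    · rintro ⟨I, hI, hi, -⟩
      exact hi
  have hdisjT : (F : Set (Finset (Fin n))).PairwiseDisjoint T := by
    intro I hI I' hI' hne'
    refine Finset.disjoint_left.mpr ?_
    intro i hi hi'
    have h1 : (f i).1 ∈ I := (Finset.mem_filter.mp hi).2
    have h2 : (f i).1 ∈ I' := (Finset.mem_filter.mp hi').2
    exact Finset.disjoint_left.mp (hFdisj hI hI' hne') h1 h2
  have hmono' : ∀ p q : Fin (2*m), p ≤ q → (f p).1 ≤ (f q).1 := by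
    intro p q hpq
    rcases eq_or_lt_of_le hpq with rfl|h
    · exact le_refl _
    · exact le_of_lt (hmono p q h)
  have hbound : |∑ i ∈ J, (-1:ℤ)^i.val| ≤ (t:ℤ) := by
    rw [hbiUnion, Finset.sum_biUnion hdisjT]
    calc |∑ I ∈ F, ∑ i ∈ T I, (-1:ℤ)^i.val|
        ≤ ∑ I ∈ F, |∑ i ∈ T I, (-1:ℤ)^i.val| := Finset.abs_sum_le_sum_abs _ _
      _ ≤ ∑ _I ∈ F, (1:ℤ) := by
          refine Finset.sum_le_sum (fun I hI => ?_)
          refine alt_sum_convex _ (fun i k j hi hj hik hkj => ?_)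
          obtain ⟨a, b, rfl⟩ := hFint I hI
          have hiT := Finset.mem_filter.mp hi
          have hjT := Finset.mem_filter.mp hj
          have hk1 : a ≤ (f k).1 :=
            le_trans (Finset.mem_Icc.mp hiT.2).1 (hmono' i k hik)
          have hk2 : (f k).1 ≤ b :=
            le_trans (hmono' k j hkj) (Finset.mem_Icc.mp hjT.2).2
          have hkI : (f k).1 ∈ Finset.Icc a b := Finset.mem_Icc.mpr ⟨hk1, hk2⟩
          refine Finset.mem_filter.mpr ⟨?_, hkI⟩
          exact Finset.mem_filter.mpr ⟨Finset.mem_univ _, (hiffS k).mpr (hsub _ hI hkI)⟩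
      _ = F.card := by simp
      _ ≤ (t:ℤ) := by exact_mod_cast hFt
  have hsplit : ∑ i ∈ J, (-1:ℤ)^i.val
      = ((J.filter (fun i => Even i.val)).card : ℤ)
        - ((J.filter (fun i => ¬ Even i.val)).card : ℤ) := by
    rw [← Finset.sum_filter_add_sum_filter_not J (fun i => Even i.val)]
    rw [Finset.sum_congr rfl (fun i hi => (Finset.mem_filter.mp hi).2.neg_one_pow),
        Finset.sum_congr rfl
          (fun i hi => (Nat.not_even_iff_odd.mp (Finset.mem_filter.mp hi).2).neg_one_pow)]
    simp [sub_eq_add_neg]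
  have hB1 : (S ∩ B₁).card = (J.filter (fun i => Even i.val)).card := by
    have himg1 : S ∩ B₁ = (J.filter (fun i => Even i.val)).image f := by
      ext p
      simp only [Finset.mem_image, hJ, Finset.mem_filter, Finset.mem_inter,
        Finset.mem_univ, true_and]
      constructor
      · rintro ⟨hpS, hpB⟩
        have hpU : p ∈ B₁ ∪ B₂ := Finset.mem_union_left _ hpB
        rw [← himg] at hpU
        rcases Finset.mem_image.mp hpU with ⟨i, -, rfl⟩
        refine ⟨i, ⟨hpS, ?_⟩, rfl⟩
        by_contra hodd
        exact Finset.disjoint_left.mp hdisj hpB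
          ((halt i).2 (Nat.not_even_iff_odd.mp hodd))
      · rintro ⟨i, ⟨hiS, hiE⟩, rfl⟩
        exact ⟨hiS, (halt i).1 hiE⟩
    rw [himg1, Finset.card_image_of_injective _ hfinj]
  have hB2 : (S ∩ B₂).card = (J.filter (fun i => ¬ Even i.val)).card := by
    have himg2 : S ∩ B₂ = (J.filter (fun i => ¬ Even i.val)).image f := by
      ext p
      simp only [Finset.mem_image, hJ, Finset.mem_filter, Finset.mem_inter,
        Finset.mem_univ, true_and]
      constructor
      · rintro ⟨hpS, hpB⟩
        have hpU : p ∈ B₁ ∪ B₂ := Finset.mem_union_right _ hpB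
        rw [← himg] at hpU
        rcases Finset.mem_image.mp hpU with ⟨i, -, rfl⟩
        refine ⟨i, ⟨hpS, ?_⟩, rfl⟩
        intro heven
        exact Finset.disjoint_left.mp hdisj ((halt i).1 heven) hpB
      · rintro ⟨i, ⟨hiS, hiO⟩, rfl⟩
        exact ⟨hiS, (halt i).2 (Nat.not_even_iff_odd.mp hiO)⟩
    rw [himg2, Finset.card_image_of_injective _ hfinj]
  have hkey : |((S ∩ B₁).card : ℤ) - ((S ∩ B₂).card : ℤ)| ≤ (t:ℤ) := by
    rw [hB1, hB2, ← hsplit]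
    exact hbound
  have habs : |((S ∩ B₁).card : ℚ) - ((S ∩ B₂).card : ℚ)| ≤ (t:ℚ) := by
    exact_mod_cast hkey
  have hm' : (0:ℚ) < m := by exact_mod_cast hm
  calc |((S ∩ B₁).card : ℚ)/m - ((S ∩ B₂).card : ℚ)/m|
      = |((S ∩ B₁).card : ℚ) - ((S ∩ B₂).card : ℚ)| / m := by
        rw [div_sub_div_same, abs_div, abs_of_pos hm']
    _ ≤ (t:ℚ)/m := by gcongr
end

section
/- Let π and σ be permutations of length n with the property that π equals the composition of σ with the depth-ordering of leaves of some caterpillar grid tree T; then for every i ∈ [n], the prefix set {(σ(1), π(σ(1))), …, (σ(i), π(σ(i)))} equals the leaf-label set of some vertex of T. Consequently pw^σ(π) ≤ gw^T(π). -/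
open PPM

lemma le_foldr_max (L : List ℕ) (a : ℕ) (h : a ∈ L) : a ≤ L.foldr max 0 := by
  induction L with
  | nil => simp at h
  | cons b L ih =>
    simp only [List.foldr]
    rcases List.mem_cons.1 h with rfl | h
    · exact le_max_left _ _
    · exact le_trans (ih h) (le_max_right _ _)

lemma aux_subtree {α : Type} [DecidableEq α] :
    ∀ (T : GTree α), T.IsCaterpillar → T.leafList.Nodup →
    ∀ S : Finset α, S.Nonempty → (∀ x ∈ S, x ∈ T.leafList) →
    (∀ x ∈ S, ∀ y ∈ T.leafList, y ∉ S → T.leafDepth y ≤ T.leafDepth x) →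
    ∃ t ∈ T.subtrees, S = t.leafList.toFinset := by
  intro T
  induction T with
  | leaf a =>
    intro _ _ S hne hsub _
    refine ⟨GTree.leaf a, by simp [GTree.subtrees], ?_⟩
    obtain ⟨x, hx⟩ := hne
    have hxa : x = a := by simpa [GTree.leafList] using hsub x hx
    apply Finset.Subset.antisymm
    · intro z hz
      have : z = a := by simpa [GTree.leafList] using hsub z hz
      simp [GTree.leafList, this]
    · intro z hz
      have : z = a := by simpa [GTree.leafList] using hz
      exact this ▸ (hxa ▸ hx)
  | node l r ihl ihr =>
    intro hcat hnd S hne hsub hdep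
    obtain ⟨hleaf, hcl, hcr⟩ := hcat
    have hndl : l.leafList.Nodup := (List.nodup_append.1 hnd).1
    have hndr : r.leafList.Nodup := (List.nodup_append.1 hnd).2.1
    have hdisj : l.leafList.Disjoint r.leafList :=
      fun x hxl hxr => (List.nodup_append.1 hnd).2.2 x hxl x hxr rfl
    by_cases hfull : S = (GTree.node l r).leafList.toFinset
    · exact ⟨GTree.node l r, by simp [GTree.subtrees], hfull⟩
    have hsub' : S ⊆ (GTree.node l r).leafList.toFinset :=
      fun x hx => List.mem_toFinset.2 (hsub x hx)
    obtain ⟨y0, hy0mem, hy0S⟩ := Finset.exists_of_ssubset (lt_of_le_of_ne hsub' hfull)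
    have hy0LL : y0 ∈ (GTree.node l r).leafList := List.mem_toFinset.1 hy0mem
    rcases hleaf with ⟨a, rfl⟩ | ⟨a, rfl⟩
    · -- l = leaf a
      by_cases haS : a ∈ S
      · have hy0ne : y0 ≠ a := fun h => hy0S (h ▸ haS)
        have hy0r : y0 ∈ r.leafList := by
          have : y0 = a ∨ y0 ∈ r.leafList := by
            simpa [GTree.leafList] using hy0LL
          tauto
        have hda : (GTree.node (GTree.leaf a) r).leafDepth a = 1 := by
          simp [GTree.leafDepth, GTree.leafList]
        have hdy : (GTree.node (GTree.leaf a) r).leafDepth y0 = r.leafDepth y0 + 1 := by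
          simp [GTree.leafDepth, GTree.leafList, hy0ne]
        have hle := hdep a haS y0 hy0LL hy0S
        rw [hda, hdy] at hle
        cases r with
        | leaf b =>
          have hyb : y0 = b := by simpa [GTree.leafList] using hy0r
          subst hyb
          refine ⟨GTree.leaf a, by simp [GTree.subtrees], ?_⟩
          apply Finset.Subset.antisymm
          · intro x hx
            have hxm : x = a ∨ x = y0 := by
              simpa [GTree.leafList] using hsub x hx
            rcases hxm with rfl | rfl
            · simp [GTree.leafList]
            · exact absurd hx hy0S
          · intro x hx
            have : x = a := by simpa [GTree.leafList] using hx
            exact this ▸ haS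
        | node r1 r2 =>
          exfalso
          have : ∃ m, (GTree.node r1 r2).leafDepth y0 = m + 1 := by
            simp only [GTree.leafDepth]
            split <;> exact ⟨_, rfl⟩
          obtain ⟨m, hm⟩ := this
          omega
      · -- a ∉ S : S lives in r
        have hmem : ∀ x ∈ S, x ∈ r.leafList := by
          intro x hx
          have : x = a ∨ x ∈ r.leafList := by
            simpa [GTree.leafList] using hsub x hx
          rcases this with rfl | h
          · exact absurd hx haS
          · exact h
        have hdep' : ∀ x ∈ S, ∀ y ∈ r.leafList, y ∉ S → r.leafDepth y ≤ r.leafDepth x := by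
          intro x hx y hy hyS
          have hxa : x ≠ a := fun h => haS (h ▸ hx)
          have hya : y ≠ a := by
            intro h
            exact hdisj (by simp [GTree.leafList, h]) (h ▸ hy)
          have := hdep x hx y (by simp [GTree.leafList, hy]) hyS
          have hx' : (GTree.node (GTree.leaf a) r).leafDepth x = r.leafDepth x + 1 := by
            simp [GTree.leafDepth, GTree.leafList, hxa]
          have hy' : (GTree.node (GTree.leaf a) r).leafDepth y = r.leafDepth y + 1 := by
            simp [GTree.leafDepth, GTree.leafList, hya]
          rw [hx', hy'] at this
          omega
        obtain ⟨t, htm, hte⟩ := ihr hcr hndr S hne hmem hdep'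
        refine ⟨t, ?_, hte⟩
        simp only [GTree.subtrees, List.mem_cons, List.mem_append]
        tauto
    · -- r = leaf a
      have hanl : a ∉ l.leafList := by
        intro h
        exact hdisj h (by simp [GTree.leafList])
      by_cases haS : a ∈ S
      · have hy0ne : y0 ≠ a := fun h => hy0S (h ▸ haS)
        have hy0l : y0 ∈ l.leafList := by
          have : y0 ∈ l.leafList ∨ y0 = a := by
            simpa [GTree.leafList] using hy0LL
          tauto
        have hda : (GTree.node l (GTree.leaf a)).leafDepth a = 1 := by
          simp [GTree.leafDepth, GTree.leafList, hanl]
        have hdy : (GTree.node l (GTree.leaf a)).leafDepth y0 = l.leafDepth y0 + 1 := by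
          simp [GTree.leafDepth, GTree.leafList, hy0l]
        have hle := hdep a haS y0 hy0LL hy0S
        rw [hda, hdy] at hle
        cases l with
        | leaf b =>
          have hyb : y0 = b := by simpa [GTree.leafList] using hy0l
          subst hyb
          refine ⟨GTree.leaf a, ?_, ?_⟩
          · simp only [GTree.subtrees, List.mem_cons, List.mem_append]
            right; right
            simp [GTree.subtrees]
          · apply Finset.Subset.antisymm
            · intro x hx
              have hxm : x = y0 ∨ x = a := by
                simpa [GTree.leafList] using hsub x hx
              rcases hxm with rfl | rfl
              · exact absurd hx hy0S
              · simp [GTree.leafList]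
            · intro x hx
              have : x = a := by simpa [GTree.leafList] using hx
              exact this ▸ haS
        | node l1 l2 =>
          exfalso
          have : ∃ m, (GTree.node l1 l2).leafDepth y0 = m + 1 := by
            simp only [GTree.leafDepth]
            split <;> exact ⟨_, rfl⟩
          obtain ⟨m, hm⟩ := this
          omega
      · -- a ∉ S : S lives in l
        have hmem : ∀ x ∈ S, x ∈ l.leafList := by
          intro x hx
          have : x ∈ l.leafList ∨ x = a := by
            simpa [GTree.leafList] using hsub x hx
          rcases this with h | rfl
          · exact h
          · exact absurd hx haS
        have hdep' : ∀ x ∈ S, ∀ y ∈ l.leafList, y ∉ S → l.leafDepth y ≤ l.leafDepth x := by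
          intro x hx y hy hyS
          have := hdep x hx y (by simp [GTree.leafList, hy]) hyS
          have hx' : (GTree.node l (GTree.leaf a)).leafDepth x = l.leafDepth x + 1 := by
            simp [GTree.leafDepth, GTree.leafList, hmem x hx]
          have hy' : (GTree.node l (GTree.leaf a)).leafDepth y = l.leafDepth y + 1 := by
            simp [GTree.leafDepth, GTree.leafList, hy]
          rw [hx', hy'] at this
          omega
        obtain ⟨t, htm, hte⟩ := ihl hcl hndl S hne hmem hdep'
        refine ⟨t, ?_, hte⟩
        simp only [GTree.subtrees, List.mem_cons, List.mem_append]
        tauto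

/-- if `σ` orders the points of `π` by decreasing depth of their leaves
in a caterpillar grid tree `T`, then every `σ`-prefix set is the leaf-label set of a
vertex of `T`; consequently `pw^σ(π) ≤ gw^T(π)`. -/
theorem caterpillar_prefixes_are_subtrees {n : ℕ} (π σ : Equiv.Perm (Fin n))
    (T : GTree (Fin n × Fin n)) (hT : IsGridTree π T) (hcat : T.IsCaterpillar)
    (hσ : ∀ i j : Fin n, i ≤ j →
      T.leafDepth (σ j, π (σ j)) ≤ T.leafDepth (σ i, π (σ i))) :
    (∀ i : Fin n, ∃ t ∈ T.subtrees, prefixSet π σ i = t.leafList.toFinset) ∧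
    pwOrd π σ ≤ treeGW T := by
  obtain ⟨hnd, hset⟩ := hT
  have hdiag : ∀ m : Fin n, (m, π m) ∈ T.leafList := by
    intro m
    rw [← List.mem_toFinset, hset]
    simp [diagram]
  have key : ∀ i : Fin n, ∃ t ∈ T.subtrees, prefixSet π σ i = t.leafList.toFinset := by
    intro i
    apply aux_subtree T hcat hnd
    · refine ⟨(σ i, π (σ i)), ?_⟩
      simp only [prefixSet, Finset.mem_image, Finset.mem_filter, Finset.mem_univ, true_and]
      exact ⟨i, le_refl i, rfl⟩
    · intro x hx
      simp only [prefixSet, Finset.mem_image, Finset.mem_filter, Finset.mem_univ,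
        true_and] at hx
      obtain ⟨j, _, rfl⟩ := hx
      exact hdiag (σ j)
    · intro x hx y hy hyS
      simp only [prefixSet, Finset.mem_image, Finset.mem_filter, Finset.mem_univ,
        true_and] at hx
      obtain ⟨j, hj, rfl⟩ := hx
      have hy' : y ∈ diagram π := by rw [← hset]; exact List.mem_toFinset.2 hy
      simp only [diagram, Finset.mem_image, Finset.mem_univ, true_and] at hy'
      obtain ⟨m, rfl⟩ := hy'
      set j' := σ.symm m with hj'
      have hmj' : m = σ j' := by simp [hj']
      have hij' : i < j' := by
        by_contra h
        push_neg at h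
        apply hyS
        simp only [prefixSet, Finset.mem_image, Finset.mem_filter, Finset.mem_univ, true_and]
        exact ⟨j', h, by rw [hmj']⟩
      have hjj' : j ≤ j' := le_trans hj (le_of_lt hij')
      have := hσ j j' hjj'
      rwa [hmj']
  refine ⟨key, ?_⟩
  have fold : ∀ t ∈ T.subtrees, gridComplexity t.leafList.toFinset ≤ treeGW T := by
    intro t ht
    exact le_foldr_max _ _ (List.mem_map_of_mem (f := fun t : GTree (Fin n × Fin n) => gridComplexity t.leafList.toFinset) ht)
  apply Finset.sup_le
  intro i _
  obtain ⟨t, htm, hte⟩ := key i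
  rw [hte]
  exact fold t htm
end
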